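/- arXiv:0903.1969 — 3 statements merged into one kernel-verified Lean document; each statement's English description precedes it below -/
import Mathlib

section
/- Let T: [0,p] → [0,p] (p > 0 in ℝⁿ, componentwise) be continuous, C¹ on (0,p), with DT(x) having all entries strictly positive for 0 < x < p, DT antitone in the sense DT(y) ⪇ DT(x) for 0 < x < y < p, Tp < p, and T0 ⪈ 0. Then T has a unique fixed point q ∈ [0,p], q lies in the open box (0,p), and Tⁿx → q as n → ∞ for every x ∈ [0,p]. -/
open Set Filter Topology

section smithAux

variable {n : ℕ} {p : Fin n → ℝ} {T : (Fin n → ℝ) → (Fin n → ℝ)}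
  {J : (Fin n → ℝ) → Fin n → Fin n → ℝ}

lemma smith_isOpen_box : IsOpen {x : Fin n → ℝ | ∀ i, 0 < x i ∧ x i < p i} := by
  have h : {x : Fin n → ℝ | ∀ i, 0 < x i ∧ x i < p i}
      = Set.pi Set.univ (fun i => Ioo 0 (p i)) := by
    ext x; simp [Set.mem_pi, Set.mem_Ioo]
  rw [h]
  exact isOpen_set_pi Set.finite_univ (fun i _ => isOpen_Ioo)

lemma smith_fderiv_apply (hC1 : ContDiffOn ℝ 1 T {x | ∀ i, 0 < x i ∧ x i < p i})
    (hJ : ∀ x, (∀ i, 0 < x i ∧ x i < p i) → ∀ j : Fin n,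
      HasDerivAt (fun t => T (Function.update x j t)) (fun i => J x i j) (x j))
    {z : Fin n → ℝ} (hz : ∀ i, 0 < z i ∧ z i < p i) :
    HasFDerivAt T (fderiv ℝ T z) z ∧
      ∀ v : Fin n → ℝ, fderiv ℝ T z v = fun i => ∑ j, J z i j * v j := by
  have hdiff : DifferentiableAt ℝ T z :=
    ((hC1.differentiableOn one_ne_zero) z hz).differentiableAt
      (smith_isOpen_box.mem_nhds hz)
  have hF : HasFDerivAt T (fderiv ℝ T z) z := hdiff.hasFDerivAt
  refine ⟨hF, ?_⟩
  have hcol : ∀ j, fderiv ℝ T z (Pi.single j 1) = fun i => J z i j := by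
    intro j
    have hupd : HasDerivAt (fun t => Function.update z j t) (Pi.single j (1:ℝ)) (z j) :=
      hasDerivAt_update z j (z j)
    have hF' : HasFDerivAt T (fderiv ℝ T z) (Function.update z j (z j)) := by
      rwa [Function.update_eq_self]
    have hcomp : HasDerivAt (fun t => T (Function.update z j t))
        (fderiv ℝ T z (Pi.single j 1)) (z j) := hF'.comp_hasDerivAt _ hupd
    exact hcomp.unique (hJ z hz j)
  intro v
  have hv : v = ∑ j, v j • (Pi.single j 1 : Fin n → ℝ) := by
    funext i
    simp [Finset.sum_apply, Pi.single_apply]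
  calc fderiv ℝ T z v = fderiv ℝ T z (∑ j, v j • (Pi.single j 1 : Fin n → ℝ)) := by rw [← hv]
    _ = ∑ j, v j • fderiv ℝ T z (Pi.single j 1 : Fin n → ℝ) := by
        rw [map_sum]; simp [map_smul]
    _ = fun i => ∑ j, J z i j * v j := by
        funext i
        rw [Finset.sum_apply]
        refine Finset.sum_congr rfl fun j _ => ?_
        rw [hcol j]
        simp [mul_comm]


lemma smith_seg_mem {x y : Fin n → ℝ} {s : ℝ} (hx : ∀ i, 0 < x i ∧ x i < p i)
    (hy : ∀ i, 0 < y i ∧ y i < p i) (hxy : x ≤ y) (hs0 : 0 ≤ s) (hs1 : s ≤ 1) :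
    ∀ i, 0 < (x + s • (y - x)) i ∧ (x + s • (y - x)) i < p i := by
  intro i
  have hxi := hx i; have hyi := hy i; have hxyi := hxy i
  have h : (x + s • (y - x)) i = x i + s * (y i - x i) := by
    simp [smul_eq_mul]
  rw [h]
  constructor
  · nlinarith [hxi.1, hxyi, hs0]
  · nlinarith [hyi.2, hxyi, hs1, hs0]

/-- Core mean value inequality along a segment in the open box. -/
lemma smith_slope_ge (hC1 : ContDiffOn ℝ 1 T {x | ∀ i, 0 < x i ∧ x i < p i})
    (hJ : ∀ x, (∀ i, 0 < x i ∧ x i < p i) → ∀ j : Fin n,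
      HasDerivAt (fun t => T (Function.update x j t)) (fun i => J x i j) (x j))
    {x y : Fin n → ℝ} (hx : ∀ i, 0 < x i ∧ x i < p i)
    (hy : ∀ i, 0 < y i ∧ y i < p i) (hxy : x ≤ y)
    (K : Fin n → Fin n → ℝ)
    (hK : ∀ s : ℝ, 0 < s → s < 1 → ∀ i j, K i j ≤ J (x + s • (y - x)) i j) :
    ∀ i, (∑ j, K i j * (y j - x j)) ≤ T y i - T x i := by
  intro i
  set f : ℝ → ℝ := fun s => T (x + s • (y - x)) i with hf
  set f' : ℝ → ℝ := fun s => ∑ j, J (x + s • (y - x)) i j * (y j - x j) with hf'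
  have hder : ∀ s ∈ Icc (0:ℝ) 1, HasDerivAt f (f' s) s := by
    intro s hs
    have hzs : ∀ i, 0 < (x + s • (y - x)) i ∧ (x + s • (y - x)) i < p i :=
      smith_seg_mem hx hy hxy hs.1 hs.2
    have hline : HasDerivAt (fun s : ℝ => x + s • (y - x)) (y - x) s := by
      have h1 : HasDerivAt (fun s : ℝ => s • (y - x)) ((1:ℝ) • (y - x)) s :=
        (hasDerivAt_id s).smul_const (y - x)
      rw [one_smul] at h1
      exact h1.const_add x
    obtain ⟨hF, hFv⟩ := smith_fderiv_apply hC1 hJ hzs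
    have hcomp : HasDerivAt (fun s : ℝ => T (x + s • (y - x)))
        (fderiv ℝ T (x + s • (y - x)) (y - x)) s := hF.comp_hasDerivAt _ hline
    have hproj := (ContinuousLinearMap.proj (R := ℝ) (φ := fun _ : Fin n => ℝ) i
      ).hasFDerivAt.comp_hasDerivAt s hcomp
    have heq : (fderiv ℝ T (x + s • (y - x)) (y - x)) i = f' s := by
      rw [hFv (y - x)]
      simp [hf']
    rw [← heq]
    exact hproj
  have hcont1 : ContinuousOn f (Icc 0 1) :=
    fun s hs => (hder s hs).continuousAt.continuousWithinAt
  obtain ⟨c, hc, hceq⟩ := exists_hasDerivAt_eq_slope f f' one_pos hcont1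
    (fun s hs => hder s (Ioo_subset_Icc_self hs))
  have h10 : f 1 = T y i := by simp [hf]
  have h00 : f 0 = T x i := by simp [hf]
  have hslope : f' c = T y i - T x i := by
    rw [hceq, h10, h00]; ring
  rw [← hslope, hf']
  refine Finset.sum_le_sum fun j _ => ?_
  exact mul_le_mul_of_nonneg_right (hK c hc.1 hc.2 i j) (sub_nonneg.2 (hxy j))


/-- Monotonicity on the open box. -/
lemma smith_mono_box (hC1 : ContDiffOn ℝ 1 T {x | ∀ i, 0 < x i ∧ x i < p i})
    (hJ : ∀ x, (∀ i, 0 < x i ∧ x i < p i) → ∀ j : Fin n,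
      HasDerivAt (fun t => T (Function.update x j t)) (fun i => J x i j) (x j))
    (hJpos : ∀ x, (∀ i, 0 < x i ∧ x i < p i) → ∀ i j, 0 < J x i j)
    {x y : Fin n → ℝ} (hx : ∀ i, 0 < x i ∧ x i < p i)
    (hy : ∀ i, 0 < y i ∧ y i < p i) (hxy : x ≤ y) : T x ≤ T y := by
  intro i
  have h := smith_slope_ge hC1 hJ hx hy hxy (fun _ _ => 0)
    (fun s hs0 hs1 i j =>
      (hJpos _ (smith_seg_mem hx hy hxy hs0.le hs1.le) i j).le) i
  simp only [zero_mul, Finset.sum_const_zero] at h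
  linarith

/-- Strong monotonicity with a quantitative lower bound. -/
lemma smith_strong (hC1 : ContDiffOn ℝ 1 T {x | ∀ i, 0 < x i ∧ x i < p i})
    (hJ : ∀ x, (∀ i, 0 < x i ∧ x i < p i) → ∀ j : Fin n,
      HasDerivAt (fun t => T (Function.update x j t)) (fun i => J x i j) (x j))
    (hJanti : ∀ x y, (∀ i, 0 < x i) → (∀ i, x i < y i) → (∀ i, y i < p i) →
      (∀ i j, J y i j ≤ J x i j) ∧ J y ≠ J x)
    {x y w : Fin n → ℝ} (hx : ∀ i, 0 < x i ∧ x i < p i)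
    (hy : ∀ i, 0 < y i ∧ y i < p i) (hxy : x ≤ y)
    (hw : ∀ i, 0 < w i ∧ w i < p i) (hyw : ∀ i, y i < w i) :
    ∀ i, (∑ j, J w i j * (y j - x j)) ≤ T y i - T x i := by
  refine smith_slope_ge hC1 hJ hx hy hxy (J w) ?_
  intro s hs0 hs1 i j
  have hz := smith_seg_mem hx hy hxy hs0.le hs1.le
  refine (hJanti _ w (fun i => (hz i).1) (fun i => ?_) (fun i => (hw i).2)).1 i j
  have h2 : (x + s • (y - x)) i = x i + s * (y i - x i) := by simp [smul_eq_mul]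
  have := hxy i
  have := hyw i
  rw [h2]; nlinarith

/-- Strict monotonicity on the open box. -/
lemma smith_strict_mono (hC1 : ContDiffOn ℝ 1 T {x | ∀ i, 0 < x i ∧ x i < p i})
    (hJ : ∀ x, (∀ i, 0 < x i ∧ x i < p i) → ∀ j : Fin n,
      HasDerivAt (fun t => T (Function.update x j t)) (fun i => J x i j) (x j))
    (hJpos : ∀ x, (∀ i, 0 < x i ∧ x i < p i) → ∀ i j, 0 < J x i j)
    (hJanti : ∀ x y, (∀ i, 0 < x i) → (∀ i, x i < y i) → (∀ i, y i < p i) →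
      (∀ i j, J y i j ≤ J x i j) ∧ J y ≠ J x)
    {x y : Fin n → ℝ} (hx : ∀ i, 0 < x i ∧ x i < p i)
    (hy : ∀ i, 0 < y i ∧ y i < p i) (hxy : x ≤ y) (hne : x ≠ y) :
    ∀ i, T x i < T y i := by
  intro i
  set w : Fin n → ℝ := fun i => (y i + p i) / 2 with hwdef
  have hw : ∀ i, 0 < w i ∧ w i < p i := fun i => by
    constructor
    · have := (hy i).1; have := (hy i).2; simp [hwdef]; linarith
    · have := (hy i).2; simp [hwdef]; linarith
  have hyw : ∀ i, y i < w i := fun i => by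
    have := (hy i).2; simp [hwdef]; linarith
  have h := smith_strong hC1 hJ hJanti hx hy hxy hw hyw i
  obtain ⟨j₁, hj₁⟩ : ∃ j, x j ≠ y j := by
    by_contra hcon
    push_neg at hcon
    exact hne (funext hcon)
  have hxj : x j₁ < y j₁ := lt_of_le_of_ne (hxy j₁) hj₁
  have hterm : 0 < J w i j₁ * (y j₁ - x j₁) :=
    mul_pos (hJpos w hw i j₁) (by linarith)
  have hsum : J w i j₁ * (y j₁ - x j₁) ≤ ∑ j, J w i j * (y j - x j) := by
    exact Finset.single_le_sum
      (f := fun j => J w i j * (y j - x j))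
      (fun j _ => mul_nonneg (hJpos w hw i j).le (sub_nonneg.2 (hxy j)))
      (Finset.mem_univ j₁)
  linarith


lemma smith_tendsto_T (hcont : ContinuousOn T (Set.Icc 0 p))
    {z : ℕ → Fin n → ℝ} {x : Fin n → ℝ} (hz : ∀ k, z k ∈ Set.Icc (0 : Fin n → ℝ) p)
    (hx : x ∈ Set.Icc (0 : Fin n → ℝ) p) (hlim : Tendsto z atTop (𝓝 x)) :
    Tendsto (fun k => T (z k)) atTop (𝓝 (T x)) := by
  have h1 : Tendsto z atTop (𝓝[Set.Icc (0 : Fin n → ℝ) p] x) :=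
    tendsto_nhdsWithin_of_tendsto_nhds_of_eventually_within _ hlim
      (Filter.Eventually.of_forall hz)
  exact (hcont x hx).tendsto.comp h1

lemma smith_box_sub_Icc {x : Fin n → ℝ} (hx : ∀ i, 0 < x i ∧ x i < p i) :
    x ∈ Set.Icc (0 : Fin n → ℝ) p :=
  ⟨fun i => (hx i).1.le, fun i => (hx i).2.le⟩

/-- Monotonicity on the closed box. -/
lemma smith_mono_Icc (hp : ∀ i, 0 < p i)
    (hcont : ContinuousOn T (Set.Icc 0 p))
    (hC1 : ContDiffOn ℝ 1 T {x | ∀ i, 0 < x i ∧ x i < p i})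
    (hJ : ∀ x, (∀ i, 0 < x i ∧ x i < p i) → ∀ j : Fin n,
      HasDerivAt (fun t => T (Function.update x j t)) (fun i => J x i j) (x j))
    (hJpos : ∀ x, (∀ i, 0 < x i ∧ x i < p i) → ∀ i j, 0 < J x i j)
    {x y : Fin n → ℝ} (hx : x ∈ Set.Icc (0 : Fin n → ℝ) p)
    (hy : y ∈ Set.Icc (0 : Fin n → ℝ) p) (hxy : x ≤ y) : T x ≤ T y := by
  set ε : ℕ → ℝ := fun k => 1 / ((k : ℝ) + 1) with hεdef
  have hε0 : ∀ k, 0 < ε k := fun k => by positivity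
  have hε1 : ∀ k, ε k ≤ 1 := fun k => by
    rw [hεdef]
    rw [div_le_one (by positivity)]
    simp [Nat.cast_nonneg]
  have hεlim : Tendsto ε atTop (𝓝 0) := tendsto_one_div_add_atTop_nhds_zero_nat
  set xk : ℕ → Fin n → ℝ := fun k i => (1 - ε k) * x i + ε k * (p i / 4) with hxkdef
  set yk : ℕ → Fin n → ℝ := fun k i => (1 - ε k) * y i + ε k * (p i / 2) with hykdef
  have hxkbox : ∀ k, ∀ i, 0 < xk k i ∧ xk k i < p i := by
    intro k i
    have h1 := (hx.1 i); have h2 := (hx.2 i); have h3 := hp i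
    have h4 := hε0 k; have h5 := hε1 k
    simp only [hxkdef, Pi.zero_apply] at *
    constructor <;> nlinarith
  have hykbox : ∀ k, ∀ i, 0 < yk k i ∧ yk k i < p i := by
    intro k i
    have h1 := (hy.1 i); have h2 := (hy.2 i); have h3 := hp i
    have h4 := hε0 k; have h5 := hε1 k
    simp only [hykdef, Pi.zero_apply] at *
    constructor <;> nlinarith
  have hle : ∀ k, xk k ≤ yk k := by
    intro k i
    have h1 := hxy i; have h3 := hp i
    have h4 := hε0 k; have h5 := hε1 k
    simp only [hxkdef, hykdef]
    nlinarith
  have hmono : ∀ k, T (xk k) ≤ T (yk k) := fun k =>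
    smith_mono_box hC1 hJ hJpos (hxkbox k) (hykbox k) (hle k)
  have hxlim : Tendsto xk atTop (𝓝 x) := by
    rw [tendsto_pi_nhds]
    intro i
    have : Tendsto (fun k => (1 - ε k) * x i + ε k * (p i / 4)) atTop
        (𝓝 ((1 - 0) * x i + 0 * (p i / 4))) := by
      exact (((tendsto_const_nhds.sub hεlim).mul_const (x i)).add
        (hεlim.mul_const (p i / 4)))
    simpa using this
  have hylim : Tendsto yk atTop (𝓝 y) := by
    rw [tendsto_pi_nhds]
    intro i
    have : Tendsto (fun k => (1 - ε k) * y i + ε k * (p i / 2)) atTop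
        (𝓝 ((1 - 0) * y i + 0 * (p i / 2))) := by
      exact (((tendsto_const_nhds.sub hεlim).mul_const (y i)).add
        (hεlim.mul_const (p i / 2)))
    simpa using this
  have hTx := smith_tendsto_T hcont (fun k => smith_box_sub_Icc (hxkbox k)) hx hxlim
  have hTy := smith_tendsto_T hcont (fun k => smith_box_sub_Icc (hykbox k)) hy hylim
  intro i
  exact le_of_tendsto_of_tendsto' ((tendsto_pi_nhds.1 hTx) i)
    ((tendsto_pi_nhds.1 hTy) i) (fun k => hmono k i)


/-- Every fixed point in the closed box lies in the open box. -/
lemma smith_fixed_interior (hp : ∀ i, 0 < p i)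
    (hcont : ContinuousOn T (Set.Icc 0 p))
    (hC1 : ContDiffOn ℝ 1 T {x | ∀ i, 0 < x i ∧ x i < p i})
    (hJ : ∀ x, (∀ i, 0 < x i ∧ x i < p i) → ∀ j : Fin n,
      HasDerivAt (fun t => T (Function.update x j t)) (fun i => J x i j) (x j))
    (hJpos : ∀ x, (∀ i, 0 < x i ∧ x i < p i) → ∀ i j, 0 < J x i j)
    (hJanti : ∀ x y, (∀ i, 0 < x i) → (∀ i, x i < y i) → (∀ i, y i < p i) →
      (∀ i j, J y i j ≤ J x i j) ∧ J y ≠ J x)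
    (hTp : ∀ i, T p i < p i)
    (hT0 : (∀ i, 0 ≤ T 0 i) ∧ T 0 ≠ 0)
    {u : Fin n → ℝ} (hu : u ∈ Set.Icc (0 : Fin n → ℝ) p) (hfix : T u = u) :
    ∀ i, 0 < u i ∧ u i < p i := by
  have hpmem : p ∈ Set.Icc (0 : Fin n → ℝ) p := ⟨fun i => (hp i).le, le_rfl⟩
  have h0mem : (0 : Fin n → ℝ) ∈ Set.Icc (0 : Fin n → ℝ) p := ⟨le_rfl, fun i => (hp i).le⟩
  have hup : ∀ i, u i < p i := by
    intro i
    have h1 : T u ≤ T p := smith_mono_Icc hp hcont hC1 hJ hJpos hu hpmem hu.2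
    calc u i = T u i := by rw [hfix]
      _ ≤ T p i := h1 i
      _ < p i := hTp i
  have hu0 : T 0 ≤ u := by
    have h1 : T 0 ≤ T u := smith_mono_Icc hp hcont hC1 hJ hJpos h0mem hu hu.1
    rw [hfix] at h1; exact h1
  have hune : u ≠ 0 := by
    intro h
    rw [h] at hfix
    exact hT0.2 hfix
  obtain ⟨j₀, hj₀⟩ : ∃ j, 0 < u j := by
    by_contra hcon
    push_neg at hcon
    exact hune (funext fun j => le_antisymm (hcon j) (hu.1 j))
  set c : Fin n → ℝ := fun i => p i / 2 with hcdef
  set w : Fin n → ℝ := fun i => (max (u i) (c i) + p i) / 2 with hwdef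
  have hwbox : ∀ i, 0 < w i ∧ w i < p i := by
    intro i
    have h1 := hp i; have h2 := hup i
    have hmaxlt : max (u i) (c i) < p i := max_lt h2 (by simp [hcdef]; linarith)
    have hmax0 : (0:ℝ) < max (u i) (c i) := lt_max_of_lt_right (by simp [hcdef]; linarith)
    constructor
    · simp only [hwdef]; linarith
    · simp only [hwdef]; linarith
  set ε : ℕ → ℝ := fun k => 1 / ((k : ℝ) + 1) with hεdef
  have hε0 : ∀ k, 0 < ε k := fun k => by positivity
  have hε1 : ∀ k, ε k ≤ 1 := fun k => by
    rw [hεdef, div_le_one (by positivity)]; simp [Nat.cast_nonneg]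
  have hεlim : Tendsto ε atTop (𝓝 0) := tendsto_one_div_add_atTop_nhds_zero_nat
  set xk : ℕ → Fin n → ℝ := fun k i => ε k * c i with hxkdef
  set yk : ℕ → Fin n → ℝ := fun k i => (1 - ε k) * u i + ε k * c i with hykdef
  have hcpos : ∀ i, 0 < c i := fun i => by simp [hcdef]; linarith [hp i]
  have hclt : ∀ i, c i < p i := fun i => by simp [hcdef]; linarith [hp i]
  have hxkbox : ∀ k i, 0 < xk k i ∧ xk k i < p i := by
    intro k i
    have := hε0 k; have := hε1 k; have := hcpos i; have := hclt i
    constructor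
    · simp only [hxkdef]; positivity
    · simp only [hxkdef]; nlinarith
  have hykbox : ∀ k i, 0 < yk k i ∧ yk k i < p i := by
    intro k i
    have := hε0 k; have := hε1 k; have := hcpos i; have := hclt i
    have h1 := hu.1 i; have h2 := hup i
    constructor
    · simp only [hykdef, Pi.zero_apply] at *; nlinarith
    · simp only [hykdef, Pi.zero_apply] at *; nlinarith
  have hle : ∀ k, xk k ≤ yk k := by
    intro k i
    have := hε0 k; have := hε1 k; have h1 := hu.1 i
    simp only [hxkdef, hykdef, Pi.zero_apply] at *
    nlinarith
  have hykw : ∀ k i, yk k i < w i := by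
    intro k i
    have := hε0 k; have := hε1 k
    have h1 : u i ≤ max (u i) (c i) := le_max_left _ _
    have h2 : c i ≤ max (u i) (c i) := le_max_right _ _
    have h3 : max (u i) (c i) < w i := by
      simp only [hwdef]; linarith [hup i, hclt i,
        max_lt (hup i) (hclt i)]
    have h4 : yk k i ≤ max (u i) (c i) := by
      simp only [hykdef, Pi.zero_apply] at *
      nlinarith [hu.1 i]
    linarith
  have hkey : ∀ k i, (1 - ε k) * (J w i j₀ * u j₀) ≤ T (yk k) i - T (xk k) i := by
    intro k i
    have hstrong := smith_strong hC1 hJ hJanti (hxkbox k) (hykbox k) (hle k) hwbox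
      (hykw k) i
    have hdiff : ∀ j, yk k j - xk k j = (1 - ε k) * u j := by
      intro j; simp only [hxkdef, hykdef]; ring
    have hseq : ∑ j, J w i j * (yk k j - xk k j) = ∑ j, J w i j * ((1 - ε k) * u j) :=
      Finset.sum_congr rfl (fun j _ => by rw [hdiff j])
    rw [hseq] at hstrong
    have hsum : J w i j₀ * ((1 - ε k) * u j₀) ≤ ∑ j, J w i j * ((1 - ε k) * u j) :=
      Finset.single_le_sum
        (f := fun j => J w i j * ((1 - ε k) * u j))
        (fun j _ => by
          have := hε1 k
          exact mul_nonneg (hJpos w hwbox i j).le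
            (mul_nonneg (by linarith) (hu.1 j)))
        (Finset.mem_univ j₀)
    calc (1 - ε k) * (J w i j₀ * u j₀) = J w i j₀ * ((1 - ε k) * u j₀) := by ring
      _ ≤ ∑ j, J w i j * ((1 - ε k) * u j) := hsum
      _ ≤ T (yk k) i - T (xk k) i := hstrong
  -- limits
  have hxlim : Tendsto xk atTop (𝓝 0) := by
    rw [tendsto_pi_nhds]
    intro i
    have h := hεlim.mul_const (c i)
    simpa [hxkdef, hεdef] using h
  have hylim : Tendsto yk atTop (𝓝 u) := by
    rw [tendsto_pi_nhds]
    intro i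
    have : Tendsto (fun k => (1 - ε k) * u i + ε k * c i) atTop
        (𝓝 ((1 - 0) * u i + 0 * c i)) :=
      ((tendsto_const_nhds.sub hεlim).mul_const (u i)).add (hεlim.mul_const (c i))
    simpa [hykdef, hεdef] using this
  have hTx := smith_tendsto_T hcont
    (fun k => smith_box_sub_Icc (hxkbox k)) h0mem hxlim
  have hTy := smith_tendsto_T hcont
    (fun k => smith_box_sub_Icc (hykbox k)) hu hylim
  intro i
  refine ⟨?_, hup i⟩
  have hlim2 : Tendsto (fun k => T (yk k) i - T (xk k) i) atTop
      (𝓝 (u i - T 0 i)) := by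
    have := ((tendsto_pi_nhds.1 hTy) i).sub ((tendsto_pi_nhds.1 hTx) i)
    rwa [hfix] at this
  have hlim1 : Tendsto (fun k => (1 - ε k) * (J w i j₀ * u j₀)) atTop
      (𝓝 ((1 - 0) * (J w i j₀ * u j₀))) :=
    (tendsto_const_nhds.sub hεlim).mul_const _
  have hfin : (1 - 0) * (J w i j₀ * u j₀) ≤ u i - T 0 i :=
    le_of_tendsto_of_tendsto' hlim1 hlim2 (fun k => hkey k i)
  have hpos : 0 < J w i j₀ * u j₀ := mul_pos (hJpos w hwbox i j₀) hj₀
  have := hT0.1 i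
  linarith


/-- Concavity chord inequality along rays from the origin. -/
lemma smith_chord (hcont : ContinuousOn T (Set.Icc 0 p))
    (hC1 : ContDiffOn ℝ 1 T {x | ∀ i, 0 < x i ∧ x i < p i})
    (hJ : ∀ x, (∀ i, 0 < x i ∧ x i < p i) → ∀ j : Fin n,
      HasDerivAt (fun t => T (Function.update x j t)) (fun i => J x i j) (x j))
    (hJanti : ∀ x y, (∀ i, 0 < x i) → (∀ i, x i < y i) → (∀ i, y i < p i) →
      (∀ i j, J y i j ≤ J x i j) ∧ J y ≠ J x)
    {q : Fin n → ℝ} (hq : ∀ i, 0 < q i ∧ q i < p i)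
    {θ : ℝ} (hθ0 : 0 < θ) (hθ1 : θ < 1) :
    ∀ i, θ * T q i + (1 - θ) * T 0 i ≤ T (θ • q) i := by
  intro i
  set f : ℝ → ℝ := fun s => T (s • q) i with hfdef
  set f' : ℝ → ℝ := fun s => ∑ j, J (s • q) i j * q j with hf'def
  have hmem : ∀ s : ℝ, 0 < s → s < 1 → ∀ i, 0 < (s • q) i ∧ (s • q) i < p i := by
    intro s hs0 hs1 i
    have h1 := (hq i).1; have h2 := (hq i).2
    constructor
    · simp only [Pi.smul_apply, smul_eq_mul]; positivity
    · simp only [Pi.smul_apply, smul_eq_mul]; nlinarith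
  have hder : ∀ s : ℝ, 0 < s → s < 1 → HasDerivAt f (f' s) s := by
    intro s hs0 hs1
    have hline : HasDerivAt (fun s : ℝ => s • q) q s := by
      have h1 : HasDerivAt (fun s : ℝ => s • q) ((1:ℝ) • q) s :=
        (hasDerivAt_id s).smul_const q
      rwa [one_smul] at h1
    obtain ⟨hF, hFv⟩ := smith_fderiv_apply hC1 hJ (hmem s hs0 hs1)
    have hcomp : HasDerivAt (fun s : ℝ => T (s • q))
        (fderiv ℝ T (s • q) q) s := hF.comp_hasDerivAt _ hline
    have hproj := (ContinuousLinearMap.proj (R := ℝ) (φ := fun _ : Fin n => ℝ) i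
      ).hasFDerivAt.comp_hasDerivAt s hcomp
    have heq : (fderiv ℝ T (s • q) q) i = f' s := by
      rw [hFv q]
    rw [← heq]
    exact hproj
  have hmapIcc : ∀ s ∈ Icc (0:ℝ) 1, s • q ∈ Set.Icc (0 : Fin n → ℝ) p := by
    intro s hs
    constructor
    · intro j
      simp only [Pi.zero_apply, Pi.smul_apply, smul_eq_mul]
      exact mul_nonneg hs.1 (hq j).1.le
    · intro j
      simp only [Pi.smul_apply, smul_eq_mul]
      have h1 := (hq j).1; have h2 := (hq j).2
      nlinarith [hs.1, hs.2]
  have hcontf : ContinuousOn f (Icc 0 1) := by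
    have hc1 : ContinuousOn (fun s : ℝ => s • q) (Icc 0 1) :=
      (continuous_id.smul continuous_const).continuousOn
    have hc2 : ContinuousOn (fun s : ℝ => T (s • q)) (Icc 0 1) :=
      hcont.comp hc1 hmapIcc
    exact (continuous_apply i).comp_continuousOn hc2
  obtain ⟨c₁, hc₁, he₁⟩ := exists_hasDerivAt_eq_slope f f' hθ0
    (hcontf.mono (Icc_subset_Icc le_rfl hθ1.le))
    (fun s hs => hder s hs.1 (lt_trans hs.2 hθ1))
  obtain ⟨c₂, hc₂, he₂⟩ := exists_hasDerivAt_eq_slope f f' hθ1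
    (hcontf.mono (Icc_subset_Icc hθ0.le le_rfl))
    (fun s hs => hder s (lt_trans hθ0 hs.1) hs.2)
  have hanti : f' c₂ ≤ f' c₁ := by
    have hc12 : c₁ < c₂ := lt_trans hc₁.2 hc₂.1
    have hJle := (hJanti (c₁ • q) (c₂ • q)
      (fun j => (hmem c₁ hc₁.1 (lt_trans hc₁.2 hθ1) j).1)
      (fun j => by
        simp only [Pi.smul_apply, smul_eq_mul]
        exact mul_lt_mul_of_pos_right hc12 (hq j).1)
      (fun j => (hmem c₂ (lt_trans hθ0 hc₂.1) hc₂.2 j).2)).1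
    exact Finset.sum_le_sum fun j _ =>
      mul_le_mul_of_nonneg_right (hJle i j) (hq j).1.le
  rw [he₁, he₂] at hanti
  have hf1 : f 1 = T q i := by simp [hfdef]
  have hf0 : f 0 = T 0 i := by simp [hfdef]
  rw [hf1, hf0] at hanti
  have hd1 : (0:ℝ) < θ - 0 := by linarith
  have hd2 : (0:ℝ) < 1 - θ := by linarith
  rw [div_le_div_iff₀ hd2 hd1] at hanti
  have hfθ : f θ = T (θ • q) i := rfl
  rw [hfθ] at hanti
  nlinarith [hanti]

end smithAux

/-- Smith's fixed point theorem for monotone concave maps, case `T 0 ⪈ 0`: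
if `T : [0,p] → [0,p]` is continuous, C¹ on the open box `(0,p)` with
entrywise positive Jacobian `J`, the Jacobian is strictly antitone
(`J y ⪇ J x` for `0 < x < y < p` componentwise), `T p < p` and `T 0 ⪈ 0`,
then `T` has a unique fixed point `q` in `[0,p]`, `q` lies in `(0,p)`, and
all orbits of `T` starting in `[0,p]` converge to `q`. -/
theorem stmt_10 (n : ℕ) (p : Fin n → ℝ) (hp : ∀ i, 0 < p i)
    (T : (Fin n → ℝ) → (Fin n → ℝ))
    (hmaps : ∀ x ∈ Set.Icc 0 p, T x ∈ Set.Icc 0 p)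
    (hcont : ContinuousOn T (Set.Icc 0 p))
    (hC1 : ContDiffOn ℝ 1 T {x | ∀ i, 0 < x i ∧ x i < p i})
    (J : (Fin n → ℝ) → Fin n → Fin n → ℝ)
    (hJ : ∀ x, (∀ i, 0 < x i ∧ x i < p i) → ∀ j : Fin n,
      HasDerivAt (fun t => T (Function.update x j t)) (fun i => J x i j) (x j))
    (hJpos : ∀ x, (∀ i, 0 < x i ∧ x i < p i) → ∀ i j, 0 < J x i j)
    (hJanti : ∀ x y, (∀ i, 0 < x i) → (∀ i, x i < y i) → (∀ i, y i < p i) →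
      (∀ i j, J y i j ≤ J x i j) ∧ J y ≠ J x)
    (hTp : ∀ i, T p i < p i)
    (hT0 : (∀ i, 0 ≤ T 0 i) ∧ T 0 ≠ 0) :
    ∃ q ∈ Set.Icc (0 : Fin n → ℝ) p, T q = q ∧ (∀ i, 0 < q i ∧ q i < p i) ∧
      (∀ q' ∈ Set.Icc (0 : Fin n → ℝ) p, T q' = q' → q' = q) ∧
      ∀ x ∈ Set.Icc (0 : Fin n → ℝ) p,
        Filter.Tendsto (fun k => T^[k] x) Filter.atTop (nhds q) := by
  rcases Nat.eq_zero_or_pos n with hn | hn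
  · subst hn
    exact absurd (funext fun i => i.elim0) hT0.2
  haveI : Nonempty (Fin n) := Fin.pos_iff_nonempty.mp hn
  have hpmem : p ∈ Set.Icc (0 : Fin n → ℝ) p := ⟨fun i => (hp i).le, le_rfl⟩
  have h0mem : (0 : Fin n → ℝ) ∈ Set.Icc (0 : Fin n → ℝ) p :=
    ⟨le_rfl, fun i => (hp i).le⟩
  have mono : ∀ x y : Fin n → ℝ, x ∈ Set.Icc (0 : Fin n → ℝ) p →
      y ∈ Set.Icc (0 : Fin n → ℝ) p → x ≤ y → T x ≤ T y :=
    fun x y hx hy hxy => smith_mono_Icc hp hcont hC1 hJ hJpos hx hy hxy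
  set A : ℕ → Fin n → ℝ := fun k => T^[k] p with hAdef
  set B : ℕ → Fin n → ℝ := fun k => T^[k] 0 with hBdef
  have hA_mem : ∀ k, A k ∈ Set.Icc (0 : Fin n → ℝ) p := by
    intro k
    induction k with
    | zero => exact hpmem
    | succ k ih =>
      have : A (k+1) = T (A k) := Function.iterate_succ_apply' T k p
      rw [this]; exact hmaps _ ih
  have hB_mem : ∀ k, B k ∈ Set.Icc (0 : Fin n → ℝ) p := by
    intro k
    induction k with
    | zero => exact h0mem
    | succ k ih =>
      have : B (k+1) = T (B k) := Function.iterate_succ_apply' T k 0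
      rw [this]; exact hmaps _ ih
  have hA_succ : ∀ k, A (k+1) ≤ A k := by
    intro k
    induction k with
    | zero =>
      have h1 : A 1 = T p := by simp [hAdef]
      have h0 : A 0 = p := rfl
      rw [h1, h0]; exact fun i => (hTp i).le
    | succ k ih =>
      have h1 : A (k+2) = T (A (k+1)) := Function.iterate_succ_apply' T (k+1) p
      have h2 : A (k+1) = T (A k) := Function.iterate_succ_apply' T k p
      rw [h1]
      calc T (A (k+1)) ≤ T (A k) := mono _ _ (hA_mem (k+1)) (hA_mem k) ih
        _ = A (k+1) := h2.symm
  have hB_succ : ∀ k, B k ≤ B (k+1) := by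
    intro k
    induction k with
    | zero =>
      have h1 : B 1 = T 0 := by simp [hBdef]
      have h0 : B 0 = 0 := rfl
      rw [h1, h0]; exact fun i => hT0.1 i
    | succ k ih =>
      have h1 : B (k+2) = T (B (k+1)) := Function.iterate_succ_apply' T (k+1) 0
      have h2 : B (k+1) = T (B k) := Function.iterate_succ_apply' T k 0
      rw [h1]
      calc B (k+1) = T (B k) := h2
        _ ≤ T (B (k+1)) := mono _ _ (hB_mem k) (hB_mem (k+1)) ih
  have hA_anti : Antitone A := antitone_nat_of_succ_le hA_succ
  have hB_mono : Monotone B := monotone_nat_of_le_succ hB_succ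
  have hBA : ∀ k, B k ≤ A k := by
    intro k
    induction k with
    | zero => exact fun i => (hp i).le
    | succ k ih =>
      have h1 : A (k+1) = T (A k) := Function.iterate_succ_apply' T k p
      have h2 : B (k+1) = T (B k) := Function.iterate_succ_apply' T k 0
      rw [h1, h2]
      exact mono _ _ (hB_mem k) (hA_mem k) ih
  set q : Fin n → ℝ := fun i => ⨅ k, A k i with hqdef
  set m : Fin n → ℝ := fun i => ⨆ k, B k i with hmdef
  have hAq : Filter.Tendsto A Filter.atTop (nhds q) := by
    rw [tendsto_pi_nhds]
    intro i
    exact tendsto_atTop_ciInf (fun a b hab => hA_anti hab i)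
      ⟨0, by rintro r ⟨k, rfl⟩; exact (hA_mem k).1 i⟩
  have hBm : Filter.Tendsto B Filter.atTop (nhds m) := by
    rw [tendsto_pi_nhds]
    intro i
    exact tendsto_atTop_ciSup (fun a b hab => hB_mono hab i)
      ⟨p i, by rintro r ⟨k, rfl⟩; exact (hB_mem k).2 i⟩
  have hq_mem : q ∈ Set.Icc (0 : Fin n → ℝ) p := by
    constructor
    · intro i
      exact ge_of_tendsto' ((tendsto_pi_nhds.1 hAq) i) (fun k => (hA_mem k).1 i)
    · intro i
      exact le_of_tendsto' ((tendsto_pi_nhds.1 hAq) i) (fun k => (hA_mem k).2 i)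
  have hm_mem : m ∈ Set.Icc (0 : Fin n → ℝ) p := by
    constructor
    · intro i
      exact ge_of_tendsto' ((tendsto_pi_nhds.1 hBm) i) (fun k => (hB_mem k).1 i)
    · intro i
      exact le_of_tendsto' ((tendsto_pi_nhds.1 hBm) i) (fun k => (hB_mem k).2 i)
  have hTq : T q = q := by
    have h1 : Filter.Tendsto (fun k => A (k+1)) Filter.atTop (nhds q) :=
      hAq.comp (Filter.tendsto_add_atTop_nat 1)
    have h2 : Filter.Tendsto (fun k => T (A k)) Filter.atTop (nhds (T q)) :=
      smith_tendsto_T hcont hA_mem hq_mem hAq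
    have h3 : (fun k => A (k+1)) = fun k => T (A k) :=
      funext fun k => Function.iterate_succ_apply' T k p
    rw [h3] at h1
    exact tendsto_nhds_unique h2 h1
  have hTm : T m = m := by
    have h1 : Filter.Tendsto (fun k => B (k+1)) Filter.atTop (nhds m) :=
      hBm.comp (Filter.tendsto_add_atTop_nat 1)
    have h2 : Filter.Tendsto (fun k => T (B k)) Filter.atTop (nhds (T m)) :=
      smith_tendsto_T hcont hB_mem hm_mem hBm
    have h3 : (fun k => B (k+1)) = fun k => T (B k) :=
      funext fun k => Function.iterate_succ_apply' T k 0
    rw [h3] at h1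
    exact tendsto_nhds_unique h2 h1
  have hmq : m ≤ q := fun i =>
    le_of_tendsto_of_tendsto' ((tendsto_pi_nhds.1 hBm) i)
      ((tendsto_pi_nhds.1 hAq) i) (fun k => hBA k i)
  have hq_box : ∀ i, 0 < q i ∧ q i < p i :=
    smith_fixed_interior hp hcont hC1 hJ hJpos hJanti hTp hT0 hq_mem hTq
  have hm_box : ∀ i, 0 < m i ∧ m i < p i :=
    smith_fixed_interior hp hcont hC1 hJ hJpos hJanti hTp hT0 hm_mem hTm
  -- uniqueness: m = q
  have hmq_eq : m = q := by
    by_contra hne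
    obtain ⟨i₀, -, hi₀⟩ := Finset.exists_min_image Finset.univ
      (fun i => m i / q i) Finset.univ_nonempty
    set θ : ℝ := m i₀ / q i₀ with hθdef
    have hθpos : 0 < θ := div_pos (hm_box i₀).1 (hq_box i₀).1
    have hθq : ∀ i, θ * q i ≤ m i := by
      intro i
      have h := hi₀ i (Finset.mem_univ i)
      exact (le_div_iff₀ (hq_box i).1).1 h
    have hθ1 : θ ≤ 1 := by
      rw [hθdef, div_le_one (hq_box i₀).1]
      exact hmq i₀
    have hmi₀ : m i₀ = θ * q i₀ := by
      rw [hθdef, div_mul_cancel₀ _ (ne_of_gt (hq_box i₀).1)]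
    rcases eq_or_lt_of_le hθ1 with hθeq | hθlt
    · apply hne
      funext i
      refine le_antisymm (hmq i) ?_
      have := hθq i
      rw [hθeq] at this
      linarith
    · have hchord := smith_chord hcont hC1 hJ hJanti hq_box hθpos hθlt
      have hchord' : ∀ i, θ * q i + (1 - θ) * T 0 i ≤ T (θ • q) i := by
        intro i
        have h := hchord i
        rw [hTq] at h
        exact h
      have hθqbox : ∀ i, 0 < (θ • q) i ∧ (θ • q) i < p i := by
        intro i
        have h1 := (hq_box i).1; have h2 := (hq_box i).2
        constructor
        · simp only [Pi.smul_apply, smul_eq_mul]; positivity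
        · simp only [Pi.smul_apply, smul_eq_mul]; nlinarith
      have hθq_le_m : θ • q ≤ m := by
        intro i
        simpa [smul_eq_mul] using hθq i
      by_cases hmeq : m = θ • q
      · apply hT0.2
        funext i
        have hTθq : T (θ • q) i = θ * q i := by
          rw [← hmeq, hTm, hmeq]
          simp [smul_eq_mul]
        have h2 := hchord' i
        rw [hTθq] at h2
        have h3 : T 0 i ≤ 0 := by nlinarith [hT0.1 i]
        exact le_antisymm h3 (hT0.1 i)
      · have hne2 : θ • q ≠ m := fun h => hmeq h.symm
        have hstrict := smith_strict_mono hC1 hJ hJpos hJanti hθqbox hm_box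
          hθq_le_m hne2 i₀
        have h2 := hchord' i₀
        have h3 : T m i₀ = m i₀ := by rw [hTm]
        have h4 : 0 ≤ (1 - θ) * T 0 i₀ :=
          mul_nonneg (by linarith) (hT0.1 i₀)
        linarith
  refine ⟨q, hq_mem, hTq, hq_box, ?_, ?_⟩
  · intro u hu hfix
    have hBu : ∀ k, B k ≤ u := by
      intro k
      induction k with
      | zero => exact hu.1
      | succ k ih =>
        have h2 : B (k+1) = T (B k) := Function.iterate_succ_apply' T k 0
        rw [h2]
        calc T (B k) ≤ T u := mono _ _ (hB_mem k) hu ih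
          _ = u := hfix
    have huA : ∀ k, u ≤ A k := by
      intro k
      induction k with
      | zero => exact hu.2
      | succ k ih =>
        have h2 : A (k+1) = T (A k) := Function.iterate_succ_apply' T k p
        rw [h2]
        calc u = T u := hfix.symm
          _ ≤ T (A k) := mono _ _ hu (hA_mem k) ih
    funext i
    refine le_antisymm ?_ ?_
    · exact ge_of_tendsto' ((tendsto_pi_nhds.1 hAq) i) (fun k => huA k i)
    · rw [← hmq_eq]
      exact le_of_tendsto' ((tendsto_pi_nhds.1 hBm) i) (fun k => hBu k i)
  · intro x hx
    have hxmem : ∀ k, T^[k] x ∈ Set.Icc (0 : Fin n → ℝ) p := by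
      intro k
      induction k with
      | zero => exact hx
      | succ k ih =>
        rw [Function.iterate_succ_apply']
        exact hmaps _ ih
    have hBx : ∀ k, B k ≤ T^[k] x := by
      intro k
      induction k with
      | zero => exact hx.1
      | succ k ih =>
        have h2 : B (k+1) = T (B k) := Function.iterate_succ_apply' T k 0
        rw [h2, Function.iterate_succ_apply']
        exact mono _ _ (hB_mem k) (hxmem k) ih
    have hxA : ∀ k, T^[k] x ≤ A k := by
      intro k
      induction k with
      | zero => exact hx.2
      | succ k ih =>
        have h2 : A (k+1) = T (A k) := Function.iterate_succ_apply' T k p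
        rw [h2, Function.iterate_succ_apply']
        exact mono _ _ (hxmem k) (hA_mem k) ih
    have hBlim : Filter.Tendsto B Filter.atTop (nhds q) := hmq_eq ▸ hBm
    rw [tendsto_pi_nhds]
    intro i
    exact tendsto_of_tendsto_of_tendsto_of_le_of_le
      ((tendsto_pi_nhds.1 hBlim) i) ((tendsto_pi_nhds.1 hAq) i)
      (fun k => hBx k i) (fun k => hxA k i)
end

section
/- Let T: [0,p] → [0,p] be continuous, C¹ on (0,p), with DT(x) entrywise positive for 0 < x < p, DT(y) ⪇ DT(x) for 0 < x < y < p, Tp < p, T0 = 0, and suppose DT(0) := lim_{x→0⁺} DT(x) exists with spectral radius ρ(DT(0)) ≤ 1. Then Tⁿx → 0 as n → ∞ for every x ∈ [0,p]. -/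
open Filter Set Topology
open scoped NNReal ENNReal

open Filter Set

private lemma aux_mono {g g' : ℝ → ℝ} {a b : ℝ} (hab : a ≤ b)
    (hg : ∀ t ∈ Set.Icc a b, HasDerivAt g (g' t) t)
    (h0 : ∀ t ∈ Set.Icc a b, 0 ≤ g' t) : g a ≤ g b := by
  have hmono : MonotoneOn g (Set.Icc a b) := by
    apply monotoneOn_of_hasDerivWithinAt_nonneg (convex_Icc a b)
      (fun t ht => (hg t ht).continuousAt.continuousWithinAt)
    · intro t ht
      rw [interior_Icc] at ht
      exact (hg t (Ioo_subset_Icc_self ht)).hasDerivWithinAt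
    · intro t ht
      rw [interior_Icc] at ht
      exact h0 t (Ioo_subset_Icc_self ht)
  exact hmono ⟨le_refl a, hab⟩ ⟨hab, le_refl b⟩ hab

private lemma aux_ub {g g' : ℝ → ℝ} {a b M : ℝ} (hab : a ≤ b)
    (hg : ∀ t ∈ Set.Icc a b, HasDerivAt g (g' t) t)
    (h0 : ∀ t ∈ Set.Icc a b, g' t ≤ M) : g b ≤ g a + M * (b - a) := by
  have := aux_mono (g := fun t => M * t - g t) (g' := fun t => M - g' t) hab
    (fun t ht => by
      have h := (((hasDerivAt_id t).const_mul M).sub (hg t ht))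
      simp only [mul_one] at h
      exact h)
    (fun t ht => sub_nonneg.mpr (h0 t ht))
  linarith

private lemma aux_lb {g g' : ℝ → ℝ} {a b m : ℝ} (hab : a ≤ b)
    (hg : ∀ t ∈ Set.Icc a b, HasDerivAt g (g' t) t)
    (h0 : ∀ t ∈ Set.Icc a b, m ≤ g' t) : g a + m * (b - a) ≤ g b := by
  have := aux_mono (g := fun t => g t - m * t) (g' := fun t => g' t - m) hab
    (fun t ht => by
      have h := ((hg t ht).sub ((hasDerivAt_id t).const_mul m))
      simp only [mul_one] at h
      exact h)
    (fun t ht => sub_nonneg.mpr (h0 t ht))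
  linarith


private lemma aux_open {n : ℕ} (p : Fin n → ℝ) :
    IsOpen {x : Fin n → ℝ | ∀ i, 0 < x i ∧ x i < p i} := by
  have : {x : Fin n → ℝ | ∀ i, 0 < x i ∧ x i < p i}
      = ⋂ i, ((fun x : Fin n → ℝ => x i) ⁻¹' Set.Ioo 0 (p i)) := by
    ext x; simp [Set.mem_iInter, Set.mem_Ioo]
  rw [this]
  exact isOpen_iInter_of_finite fun i => isOpen_Ioo.preimage (continuous_apply i)

private lemma aux_seg {n : ℕ} {p : Fin n → ℝ} {T : (Fin n → ℝ) → (Fin n → ℝ)}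
    {J : (Fin n → ℝ) → Fin n → Fin n → ℝ}
    (hC1 : ContDiffOn ℝ 1 T {x | ∀ i, 0 < x i ∧ x i < p i})
    (hJ : ∀ x, (∀ i, 0 < x i ∧ x i < p i) → ∀ j : Fin n,
      HasDerivAt (fun t => T (Function.update x j t)) (fun i => J x i j) (x j))
    (u v : Fin n → ℝ) (t : ℝ) (hmem : ∀ i, 0 < (u + t • v) i ∧ (u + t • v) i < p i)
    (i : Fin n) :
    HasDerivAt (fun s => T (u + s • v) i) (∑ j, J (u + t • v) i j * v j) t := by
  set Ω := {x : Fin n → ℝ | ∀ i, 0 < x i ∧ x i < p i} with hΩdef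
  have hΩ : IsOpen Ω := aux_open p
  set x := u + t • v with hx
  have hxΩ : x ∈ Ω := hmem
  have hdiff : DifferentiableAt ℝ T x :=
    ((hC1 x hxΩ).contDiffAt (hΩ.mem_nhds hxΩ)).differentiableAt one_ne_zero
  set D := fderiv ℝ T x with hD
  -- the fderiv applied to basis vectors equals J
  have hbasis : ∀ j, D (Pi.single j (1:ℝ)) = fun i => J x i j := by
    intro j
    have hupd : ∀ s : ℝ, Function.update x j s
        = x + (s - x j) • (Pi.single j (1:ℝ) : Fin n → ℝ) := by
      intro s
      funext k
      by_cases hk : k = j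
      · subst hk; simp [Function.update]
      · simp [Function.update, hk, Pi.single_apply]
    have hline : HasDerivAt (fun s : ℝ => x + (s - x j) • (Pi.single j (1:ℝ) : Fin n → ℝ))
        (Pi.single j (1:ℝ) : Fin n → ℝ) (x j) := by
      have h1 : HasDerivAt (fun s : ℝ => (s - x j)) 1 (x j) :=
        (hasDerivAt_id (x j)).sub_const (x j)
      have h2 := h1.smul_const (Pi.single j (1:ℝ) : Fin n → ℝ)
      simpa using h2.const_add x
    have hcomp : HasDerivAt (fun s : ℝ => T (Function.update x j s))
        (D (Pi.single j (1:ℝ))) (x j) := by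
      simp only [hupd]
      refine HasFDerivAt.comp_hasDerivAt (x j) ?_ hline
      have hx0 : x + ((x j) - x j) • (Pi.single j (1:ℝ) : Fin n → ℝ) = x := by simp
      rw [hx0]
      exact hdiff.hasFDerivAt
    exact hcomp.unique (hJ x hxΩ j)
  -- fderiv applied to v
  have hDv : D v = fun i => ∑ j, J x i j * v j := by
    have hv : (∑ j, (v j) • (Pi.single j (1:ℝ) : Fin n → ℝ)) = v := by
      rw [← Finset.univ_sum_single v]
      apply Finset.sum_congr rfl
      intro j _
      rw [← Pi.single_smul]
      simp
    conv_lhs => rw [← hv]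
    rw [map_sum]
    funext i
    rw [Finset.sum_apply]
    apply Finset.sum_congr rfl
    intro j _
    rw [map_smul, hbasis j]
    simp [mul_comm]
  -- line derivative
  have hline : HasDerivAt (fun s : ℝ => u + s • v) v t := by
    have h2 := (hasDerivAt_id t).smul_const v
    simpa using h2.const_add u
  have hcomp : HasDerivAt (fun s : ℝ => T (u + s • v)) (D v) t :=
    hdiff.hasFDerivAt.comp_hasDerivAt t hline
  rw [hDv] at hcomp
  exact hasDerivAt_pi.mp hcomp i


private lemma aux_spec {n : ℕ} (N : Matrix (Fin n) (Fin n) ℝ) (r : Fin n → ℝ) (i₀ : Fin n)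
    (hN : ∀ i j, 0 ≤ N i j) (hr : ∀ i, 0 < r i) {c : ℝ} (hc : 1 < c)
    (hcr : ∀ i, c * r i ≤ N.mulVec r i)
    (hμ : ∀ μ ∈ spectrum ℂ (Matrix.of fun i j => ((N i j : ℝ) : ℂ)), ‖μ‖ ≤ 1) :
    False := by
  haveI : Nonempty (Fin n) := ⟨i₀⟩
  letI : NormedRing (Matrix (Fin n) (Fin n) ℂ) := Matrix.linftyOpNormedRing
  letI : NormedAlgebra ℂ (Matrix (Fin n) (Fin n) ℂ) := Matrix.linftyOpNormedAlgebra
  haveI : CompleteSpace (Matrix (Fin n) (Fin n) ℂ) := FiniteDimensional.complete ℂ _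
  set A : Matrix (Fin n) (Fin n) ℂ := Matrix.of fun i j => ((N i j : ℝ) : ℂ) with hAdef
  have hAk : ∀ k : ℕ, A ^ k = (N ^ k).map Complex.ofRealHom := by
    intro k
    have : A = N.map Complex.ofRealHom := rfl
    rw [this, ← RingHom.mapMatrix_apply, ← map_pow, RingHom.mapMatrix_apply]
  -- entries of powers are nonneg
  have hNk : ∀ k : ℕ, ∀ i j, 0 ≤ (N ^ k) i j := by
    intro k
    induction k with
    | zero => intro i j; rw [pow_zero, Matrix.one_apply]; split <;> norm_num
    | succ k ih =>
      intro i j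
      rw [pow_succ, Matrix.mul_apply]
      exact Finset.sum_nonneg fun l _ => mul_nonneg (ih i l) (hN l j)
  have hc0 : (0:ℝ) < c := lt_trans one_pos hc
  -- power vector bound
  have hvk : ∀ k : ℕ, ∀ i, c ^ k * r i ≤ ((N ^ k).mulVec r) i := by
    intro k
    induction k with
    | zero => intro i; simp [Matrix.one_mulVec]
    | succ k ih =>
      intro i
      have h1 : ((N ^ (k+1)).mulVec r) i = ((N ^ k).mulVec (N.mulVec r)) i := by
        rw [Matrix.mulVec_mulVec, ← pow_succ]
      rw [h1]
      have h2 : ((N ^ k).mulVec (N.mulVec r)) i = ∑ j, (N ^ k) i j * (N.mulVec r) j := rfl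
      have h3 : ((N ^ k).mulVec r) i = ∑ j, (N ^ k) i j * r j := rfl
      rw [h2]
      calc c ^ (k+1) * r i = c * (c ^ k * r i) := by ring
        _ ≤ c * ((N ^ k).mulVec r) i := by
            exact mul_le_mul_of_nonneg_left (ih i) hc0.le
        _ = ∑ j, (N ^ k) i j * (c * r j) := by
            rw [h3, Finset.mul_sum]; apply Finset.sum_congr rfl; intro j _; ring
        _ ≤ ∑ j, (N ^ k) i j * (N.mulVec r) j := by
            apply Finset.sum_le_sum
            intro j _
            exact mul_le_mul_of_nonneg_left (hcr j) (hNk k i j)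
  -- max of r
  obtain ⟨jm, -, hjm⟩ := Finset.exists_max_image Finset.univ r ⟨i₀, Finset.mem_univ i₀⟩
  set κ : ℝ := r i₀ / r jm with hκdef
  have hκ0 : 0 < κ := div_pos (hr i₀) (hr jm)
  -- row sum bound
  have hsum : ∀ k : ℕ, c ^ k * κ ≤ ∑ j, (N ^ k) i₀ j := by
    intro k
    have h1 : c ^ k * r i₀ ≤ ∑ j, (N ^ k) i₀ j * r j := hvk k i₀
    have h2 : (∑ j, (N ^ k) i₀ j * r j) ≤ (∑ j, (N ^ k) i₀ j) * r jm := by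
      rw [Finset.sum_mul]
      apply Finset.sum_le_sum
      intro j _
      exact mul_le_mul_of_nonneg_left (hjm j (Finset.mem_univ j)) (hNk k i₀ j)
    rw [hκdef, ← mul_div_assoc, div_le_iff₀ (hr jm)]
    exact le_trans h1 h2
  -- norm bound
  have hnorm : ∀ k : ℕ, c ^ k * κ ≤ ‖A ^ k‖ := by
    intro k
    have h1 : (∑ j, ‖(A ^ k) i₀ j‖₊) ≤ ‖A ^ k‖₊ := by
      rw [Matrix.linfty_opNNNorm_def]
      exact Finset.le_sup (f := fun i => ∑ j, ‖(A ^ k) i j‖₊) (Finset.mem_univ i₀)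
    have h2 : ((∑ j, ‖(A ^ k) i₀ j‖₊ : ℝ≥0) : ℝ) = ∑ j, ‖(A ^ k) i₀ j‖ := by
      push_cast; rfl
    have h3 : ∀ j, ‖(A ^ k) i₀ j‖ = (N ^ k) i₀ j := by
      intro j
      rw [hAk k, Matrix.map_apply]
      simp only [Complex.ofRealHom_eq_coe, Complex.norm_real]
      exact abs_of_nonneg (hNk k i₀ j)
    calc c ^ k * κ ≤ ∑ j, (N ^ k) i₀ j := hsum k
      _ = ∑ j, ‖(A ^ k) i₀ j‖ := by
          apply Finset.sum_congr rfl; intro j _; rw [h3 j]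
      _ = ((∑ j, ‖(A ^ k) i₀ j‖₊ : ℝ≥0) : ℝ) := h2.symm
      _ ≤ ‖A ^ k‖ := by exact_mod_cast h1
  -- spectral radius at most 1
  have hρ1 : spectralRadius ℂ A ≤ 1 := by
    rw [spectralRadius]
    apply iSup₂_le
    intro μ hμ'
    have h := hμ μ hμ'
    have : ‖μ‖₊ ≤ 1 := by
      rw [← NNReal.coe_le_coe]
      simpa [coe_nnnorm] using h
    exact_mod_cast this
  -- Gelfand
  set c' : ℝ := (1 + c) / 2 with hc'def
  have hc'1 : 1 < c' := by rw [hc'def]; linarith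
  have hc'c : c' < c := by rw [hc'def]; linarith
  have hc'0 : 0 < c' := lt_trans one_pos hc'1
  have hgel := spectrum.pow_norm_pow_one_div_tendsto_nhds_spectralRadius A
  have hlt : spectralRadius ℂ A < ENNReal.ofReal c' :=
    lt_of_le_of_lt hρ1 (ENNReal.one_lt_ofReal.mpr hc'1)
  have hev : ∀ᶠ k : ℕ in atTop,
      ENNReal.ofReal (‖A ^ k‖ ^ (1 / (k:ℝ))) < ENNReal.ofReal c' :=
    hgel.eventually_lt_const hlt
  -- ratio goes to zero
  have hratio : Tendsto (fun k : ℕ => (c'/c) ^ k) atTop (nhds 0) :=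
    tendsto_pow_atTop_nhds_zero_of_lt_one (by positivity) ((div_lt_one hc0).mpr hc'c)
  have hev2 : ∀ᶠ k : ℕ in atTop, (c'/c) ^ k < κ := hratio.eventually_lt_const hκ0
  have hev3 : ∀ᶠ k : ℕ in atTop, 1 ≤ k := Filter.eventually_ge_atTop 1
  obtain ⟨k, hk1, hk2, hk3⟩ := (hev.and (hev2.and hev3)).exists
  -- from hk1 : ofReal(...) < ofReal c'
  have hk0 : (0:ℝ) < (k:ℝ) := by exact_mod_cast hk3
  have h4 : ‖A ^ k‖ ^ (1 / (k:ℝ)) < c' :=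
    (ENNReal.ofReal_lt_ofReal_iff_of_nonneg
      (Real.rpow_nonneg (norm_nonneg _) _)).mp hk1
  have h5 : ‖A ^ k‖ < c' ^ k := by
    have h6 : (‖A ^ k‖ ^ (1 / (k:ℝ))) ^ ((k:ℝ)) < c' ^ ((k:ℝ)) :=
      Real.rpow_lt_rpow (Real.rpow_nonneg (norm_nonneg _) _) h4 hk0
    rw [← Real.rpow_mul (norm_nonneg _)] at h6
    rw [one_div, inv_mul_cancel₀ (ne_of_gt hk0)] at h6
    rw [Real.rpow_one, Real.rpow_natCast] at h6
    exact h6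
  have h7 : c ^ k * κ < c' ^ k := lt_of_le_of_lt (hnorm k) h5
  have h8 : κ < (c'/c) ^ k := by
    rw [div_pow, lt_div_iff₀ (by positivity)]
    linarith [h7]
  linarith [hk2, h8]
set_option maxHeartbeats 2000000 in
/-- Smith's fixed point theorem for monotone concave maps, subcritical case:
if moreover `T 0 = 0` and the limit Jacobian `J₀ = lim_{x→0⁺} J x` exists
with spectral radius at most `1`, then all orbits of `T` in `[0,p]` converge
to `0`. -/
theorem stmt_11 (n : ℕ) (p : Fin n → ℝ) (hp : ∀ i, 0 < p i)
    (T : (Fin n → ℝ) → (Fin n → ℝ))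
    (hmaps : ∀ x ∈ Set.Icc 0 p, T x ∈ Set.Icc 0 p)
    (hcont : ContinuousOn T (Set.Icc 0 p))
    (hC1 : ContDiffOn ℝ 1 T {x | ∀ i, 0 < x i ∧ x i < p i})
    (J : (Fin n → ℝ) → Fin n → Fin n → ℝ)
    (hJ : ∀ x, (∀ i, 0 < x i ∧ x i < p i) → ∀ j : Fin n,
      HasDerivAt (fun t => T (Function.update x j t)) (fun i => J x i j) (x j))
    (hJpos : ∀ x, (∀ i, 0 < x i ∧ x i < p i) → ∀ i j, 0 < J x i j)
    (hJanti : ∀ x y, (∀ i, 0 < x i) → (∀ i, x i < y i) → (∀ i, y i < p i) →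
      (∀ i j, J y i j ≤ J x i j) ∧ J y ≠ J x)
    (hTp : ∀ i, T p i < p i)
    (hT0 : T 0 = 0)
    (J0 : Fin n → Fin n → ℝ)
    (hJ0 : Filter.Tendsto J
      (nhdsWithin 0 {x | ∀ i, 0 < x i ∧ x i < p i}) (nhds J0))
    (hρ : ∀ μ ∈ spectrum ℂ (Matrix.of fun i j => (J0 i j : ℂ)),
      ‖μ‖ ≤ 1) :
    ∀ x ∈ Set.Icc (0 : Fin n → ℝ) p,
      Filter.Tendsto (fun k => T^[k] x) Filter.atTop (nhds 0) := by
  -- basic facts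
  have hp0 : (0 : Fin n → ℝ) ≤ p := fun i => (hp i).le
  have h0mem : (0 : Fin n → ℝ) ∈ Set.Icc 0 p := ⟨le_refl _, hp0⟩
  have hpmem : p ∈ Set.Icc (0 : Fin n → ℝ) p := ⟨hp0, le_refl _⟩
  -- the sequence 1/(k+3)
  set sq : ℕ → ℝ := fun k => 1 / ((k : ℝ) + 3) with hsqdef
  have hsq_pos : ∀ k, 0 < sq k := fun k => by positivity
  have hsq_lt : ∀ k, sq k < 1 / 2 := by
    intro k
    rw [hsqdef]
    have h3 : (0:ℝ) ≤ (k:ℝ) := Nat.cast_nonneg k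
    rw [div_lt_div_iff₀ (by linarith) (by norm_num)]
    linarith
  have hsq_le1 : ∀ k, sq k ≤ 1 := fun k => le_of_lt (lt_trans (hsq_lt k) (by norm_num))
  have hsq_to0 : Tendsto sq atTop (𝓝 0) := by
    have h1 : Tendsto (fun k : ℕ => ((k : ℝ) + 3)) atTop atTop :=
      tendsto_atTop_add_const_right atTop 3 tendsto_natCast_atTop_atTop
    have h2 := h1.inv_tendsto_atTop
    simpa [hsqdef, one_div, Pi.inv_def] using h2
  -- continuity helper
  have hTcont : ∀ (y : ℕ → Fin n → ℝ) (z : Fin n → ℝ), z ∈ Set.Icc 0 p →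
      (∀ m, y m ∈ Set.Icc 0 p) → Tendsto y atTop (𝓝 z) →
      ∀ i, Tendsto (fun m => T (y m) i) atTop (𝓝 (T z i)) := by
    intro y z hz hy hty i
    have h1 := (hcont z hz).tendsto.comp
      (tendsto_nhdsWithin_of_tendsto_nhds_of_eventually_within _ hty
        (Filter.Eventually.of_forall hy))
    exact ((continuous_apply i).tendsto _).comp h1
  -- small multiples tend to `T 0 = 0`
  have hsmall : ∀ v, v ∈ Set.Icc (0 : Fin n → ℝ) p →
      ∀ i, Tendsto (fun m => T (sq m • v) i) atTop (𝓝 0) := by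
    intro v hv i
    have hy : Tendsto (fun m => sq m • v) atTop (𝓝 0) := by
      have := hsq_to0.smul_const v
      simpa using this
    have hyIcc : ∀ m, sq m • v ∈ Set.Icc (0 : Fin n → ℝ) p := by
      intro m
      constructor
      · intro j
        have := hv.1 j
        simp only [Pi.smul_apply, smul_eq_mul, Pi.zero_apply]
        exact mul_nonneg (hsq_pos m).le (by simpa using this)
      · intro j
        have h1 : (0:ℝ) ≤ v j := by simpa using hv.1 j
        have h2 : v j ≤ p j := hv.2 j
        have h3 := hsq_le1 m
        have h4 := (hsq_pos m).le
        simp only [Pi.smul_apply, smul_eq_mul]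
        nlinarith
    have h1 := hTcont _ 0 h0mem hyIcc hy i
    rw [hT0] at h1
    simpa using h1
  -- monotonicity on the open box
  have TmonoΩ : ∀ u v : Fin n → ℝ, (∀ i, 0 < u i ∧ u i < p i) →
      (∀ i, 0 < v i ∧ v i < p i) → u ≤ v → ∀ i, T u i ≤ T v i := by
    intro u v hu hv huv i
    have key : ∀ t ∈ Set.Icc (0:ℝ) 1,
        ∀ i', 0 < (u + t • (v - u)) i' ∧ (u + t • (v - u)) i' < p i' := by
      intro t ht i'
      have h1 := (hu i').1
      have h2 := (hv i').2
      have h3 := huv i'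
      simp only [Pi.add_apply, Pi.smul_apply, Pi.sub_apply, smul_eq_mul]
      constructor
      · nlinarith [ht.1, ht.2]
      · nlinarith [ht.1, ht.2]
    have h := aux_mono (g := fun s => T (u + s • (v - u)) i)
      (g' := fun t => ∑ j, J (u + t • (v - u)) i j * (v - u) j) zero_le_one
      (fun t ht => aux_seg hC1 hJ u (v - u) t (key t ht) i)
      (fun t ht => Finset.sum_nonneg fun j _ =>
        mul_nonneg (hJpos _ (key t ht) i j).le (sub_nonneg.mpr (huv j)))
    simpa using h
  -- monotonicity on the closed box
  have Tmono : ∀ u v : Fin n → ℝ, u ∈ Set.Icc 0 p → v ∈ Set.Icc 0 p →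
      u ≤ v → T u ≤ T v := by
    intro u v hu hv huv i
    set uk : ℕ → (Fin n → ℝ) := fun k => u + sq k • ((1/2 : ℝ) • p - u) with hukdef
    set vk : ℕ → (Fin n → ℝ) := fun k => v + sq k • ((1/2 : ℝ) • p - v) with hvkdef
    have hgen : ∀ w : Fin n → ℝ, w ∈ Set.Icc (0 : Fin n → ℝ) p → ∀ k,
        (∀ i', 0 < (w + sq k • ((1/2 : ℝ) • p - w)) i'
          ∧ (w + sq k • ((1/2 : ℝ) • p - w)) i' < p i') := by
      intro w hw k i'
      have h1 : (0:ℝ) ≤ w i' := by simpa using hw.1 i'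
      have h2 : w i' ≤ p i' := hw.2 i'
      have h3 := hsq_pos k
      have h4 := hsq_lt k
      have h5 := hp i'
      simp only [Pi.add_apply, Pi.smul_apply, Pi.sub_apply, smul_eq_mul]
      constructor
      · nlinarith
      · nlinarith
    have hgenIcc : ∀ w : Fin n → ℝ, w ∈ Set.Icc (0 : Fin n → ℝ) p → ∀ k,
        w + sq k • ((1/2 : ℝ) • p - w) ∈ Set.Icc (0 : Fin n → ℝ) p := by
      intro w hw k
      constructor
      · intro i'; simpa using (hgen w hw k i').1.le
      · intro i'; exact (hgen w hw k i').2.le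
    have hle : ∀ k, uk k ≤ vk k := by
      intro k j
      have h1 := huv j
      have h3 := hsq_pos k
      have h4 := hsq_lt k
      simp only [hukdef, hvkdef, Pi.add_apply, Pi.smul_apply, Pi.sub_apply, smul_eq_mul]
      nlinarith
    have h1 : ∀ k, T (uk k) i ≤ T (vk k) i :=
      fun k => TmonoΩ _ _ (hgen u hu k) (hgen v hv k) (hle k) i
    have hto : ∀ w : Fin n → ℝ, Tendsto (fun k => w + sq k • ((1/2 : ℝ) • p - w))
        atTop (𝓝 w) := by
      intro w
      have := (hsq_to0.smul_const ((1/2 : ℝ) • p - w)).const_add w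
      simpa using this
    have hTu := hTcont uk u hu (hgenIcc u hu) (hto u) i
    have hTv := hTcont vk v hv (hgenIcc v hv) (hto v) i
    exact le_of_tendsto_of_tendsto' hTu hTv h1
  -- iterates
  have hiter_mem : ∀ x, x ∈ Set.Icc (0 : Fin n → ℝ) p →
      ∀ k, T^[k] x ∈ Set.Icc (0 : Fin n → ℝ) p := by
    intro x hx k
    induction k with
    | zero => simpa using hx
    | succ k ih => rw [Function.iterate_succ_apply']; exact hmaps _ ih
  have hiter_mono : ∀ u v, u ∈ Set.Icc (0 : Fin n → ℝ) p →
      v ∈ Set.Icc (0 : Fin n → ℝ) p → u ≤ v → ∀ k, T^[k] u ≤ T^[k] v := by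
    intro u v hu hv huv k
    induction k with
    | zero => simpa using huv
    | succ k ih =>
      rw [Function.iterate_succ_apply', Function.iterate_succ_apply']
      exact Tmono _ _ (hiter_mem u hu k) (hiter_mem v hv k) ih
  set f : ℕ → (Fin n → ℝ) := fun k => T^[k] p with hfdef
  have hf_mem : ∀ k, f k ∈ Set.Icc (0 : Fin n → ℝ) p := hiter_mem p hpmem
  have hf_anti : Antitone f := by
    apply antitone_nat_of_succ_le
    intro k
    have h1 : T p ≤ p := fun i => (hTp i).le
    have h2 := hiter_mono (T p) p (hmaps p hpmem) hpmem h1 k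
    simpa [hfdef, Function.iterate_succ_apply] using h2
  have hbdd : ∀ i, BddBelow (Set.range fun k => f k i) := by
    intro i
    refine ⟨0, ?_⟩
    rintro y ⟨k, rfl⟩
    simpa using (hf_mem k).1 i
  set q : Fin n → ℝ := fun i => ⨅ k, f k i with hqdef
  have hfq : ∀ i, Tendsto (fun k => f k i) atTop (𝓝 (q i)) := fun i =>
    tendsto_atTop_ciInf (fun a b hab => hf_anti hab i) (hbdd i)
  have hfq' : Tendsto f atTop (𝓝 q) := tendsto_pi_nhds.mpr hfq
  have hq_le_f : ∀ k, ∀ i, q i ≤ f k i := fun k i => ciInf_le (hbdd i) k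
  have hq_mem : q ∈ Set.Icc (0 : Fin n → ℝ) p := by
    constructor
    · intro i
      simp only [Pi.zero_apply]
      exact le_ciInf fun k => by simpa using (hf_mem k).1 i
    · intro i
      exact le_trans (hq_le_f 0 i) ((hf_mem 0).2 i)
  have hq_fix : T q = q := by
    have h1 : Tendsto f atTop (𝓝[Set.Icc (0 : Fin n → ℝ) p] q) :=
      tendsto_nhdsWithin_of_tendsto_nhds_of_eventually_within _ hfq'
        (Filter.Eventually.of_forall hf_mem)
    have h2 : Tendsto (fun k => T (f k)) atTop (𝓝 (T q)) :=
      (hcont q hq_mem).tendsto.comp h1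
    have h3 : (fun k => T (f k)) = fun k => f (k + 1) :=
      funext fun k => (Function.iterate_succ_apply' T k p).symm
    have h4 : Tendsto (fun k => f (k + 1)) atTop (𝓝 q) :=
      hfq'.comp (tendsto_add_atTop_nat 1)
    exact tendsto_nhds_unique (h3 ▸ h2) h4
  -- the key claim
  have hq0 : q = 0 := by
    by_contra hq0
    obtain ⟨j₀, hj₀⟩ : ∃ j, 0 < q j := by
      by_contra h
      push_neg at h
      apply hq0
      funext i
      have h1 : (0:ℝ) ≤ q i := by simpa using hq_mem.1 i
      have h2 := h i
      simp only [Pi.zero_apply]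
      linarith
    have hqp : ∀ i, q i < p i := by
      intro i
      have h1 := hq_le_f 1 i
      have h2 : f 1 i = T p i := by simp [hfdef]
      rw [h2] at h1
      exact lt_of_le_of_lt h1 (hTp i)
    have hq0le : ∀ i, 0 ≤ q i := fun i => by simpa using hq_mem.1 i
    -- STEP 1 : q is strictly positive
    have hqpos : ∀ i, 0 < q i := by
      set w : Fin n → ℝ := q + (1/2 : ℝ) • (p - q) with hwdef
      set wk : ℕ → (Fin n → ℝ) := fun m => q + sq m • (p - q) with hwkdef
      have hwΩ : ∀ i, 0 < w i ∧ w i < p i := by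
        intro i
        have h1 := hqp i
        have h2 := hq0le i
        simp only [hwdef, Pi.add_apply, Pi.smul_apply, Pi.sub_apply, smul_eq_mul]
        constructor <;> nlinarith
      have hwkΩ : ∀ m i, 0 < wk m i ∧ wk m i < p i := by
        intro m i
        have h1 := hqp i
        have h2 := hq0le i
        have h3 := hsq_pos m
        have h4 := hsq_lt m
        simp only [hwkdef, Pi.add_apply, Pi.smul_apply, Pi.sub_apply, smul_eq_mul]
        constructor <;> nlinarith
      have hwk_lt_w : ∀ m i, wk m i < w i := by
        intro m i
        have h1 := hqp i
        have h4 := hsq_lt m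
        simp only [hwdef, hwkdef, Pi.add_apply, Pi.smul_apply, Pi.sub_apply, smul_eq_mul]
        nlinarith
      have hwkIcc : ∀ m, wk m ∈ Set.Icc (0 : Fin n → ℝ) p := by
        intro m
        constructor
        · intro i; simpa using (hwkΩ m i).1.le
        · intro i; exact (hwkΩ m i).2.le
      have hq_le_wk : ∀ m j, q j ≤ wk m j := by
        intro m j
        have h1 := hqp j
        have h3 := hsq_pos m
        simp only [hwkdef, Pi.add_apply, Pi.smul_apply, Pi.sub_apply, smul_eq_mul]
        nlinarith
      set β : Fin n → ℝ := fun i => ∑ j, J w i j * q j with hβdef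
      have hβpos : ∀ i, 0 < β i := by
        intro i
        apply Finset.sum_pos' fun j _ => mul_nonneg (hJpos w hwΩ i j).le (hq0le j)
        exact ⟨j₀, Finset.mem_univ _, mul_pos (hJpos w hwΩ i j₀) hj₀⟩
      have hTwk : ∀ m i, β i / 2 ≤ T (wk m) i := by
        intro m i
        have hmem1 : ∀ s ∈ Set.Icc (1/2 : ℝ) 1,
            ∀ i', 0 < ((0:Fin n → ℝ) + s • wk m) i'
              ∧ ((0:Fin n → ℝ) + s • wk m) i' < p i' := by
          intro s hs i'
          have h1 := (hwkΩ m i').1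
          have h2 := (hwkΩ m i').2
          simp only [Pi.add_apply, Pi.zero_apply, Pi.smul_apply, smul_eq_mul, zero_add]
          constructor
          · nlinarith [hs.1]
          · nlinarith [hs.2]
        have hlow : ∀ s ∈ Set.Icc (1/2:ℝ) 1,
            β i ≤ ∑ j, J ((0:Fin n → ℝ) + s • wk m) i j * wk m j := by
          intro s hs
          have hJge : ∀ i' j, J w i' j ≤ J ((0:Fin n → ℝ) + s • wk m) i' j := by
            have h := hJanti ((0:Fin n → ℝ) + s • wk m) w
              (fun i' => (hmem1 s hs i').1) ?_ (fun i' => (hwΩ i').2)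
            · exact h.1
            · intro i'
              have h1 := (hwkΩ m i').1
              have h2 := hwk_lt_w m i'
              simp only [Pi.add_apply, Pi.zero_apply, Pi.smul_apply, smul_eq_mul, zero_add]
              nlinarith [hs.1, hs.2]
          rw [hβdef]
          apply Finset.sum_le_sum
          intro j _
          exact mul_le_mul (hJge i j) (hq_le_wk m j) (hq0le j)
            (hJpos _ (hmem1 s hs) i j).le
        have hg1 : T ((0:Fin n → ℝ) + (1/2:ℝ) • wk m) i + β i * (1 - 1/2)
            ≤ T ((0:Fin n → ℝ) + (1:ℝ) • wk m) i :=
          aux_lb (by norm_num)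
            (fun s hs => aux_seg hC1 hJ 0 (wk m) s (hmem1 s hs) i)
            hlow
        have hghalf : (0:ℝ) ≤ T ((0:Fin n → ℝ) + (1/2:ℝ) • wk m) i := by
          have hmem2 : ∀ m' : ℕ, ∀ s ∈ Set.Icc (sq m') (1/2:ℝ),
              ∀ i', 0 < ((0:Fin n → ℝ) + s • wk m) i'
                ∧ ((0:Fin n → ℝ) + s • wk m) i' < p i' := by
            intro m' s hs i'
            have h1 := (hwkΩ m i').1
            have h2 := (hwkΩ m i').2
            have h3 := hsq_pos m'
            simp only [Pi.add_apply, Pi.zero_apply, Pi.smul_apply, smul_eq_mul, zero_add]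
            constructor
            · nlinarith [hs.1]
            · nlinarith [hs.2]
          have hmono2 : ∀ m', T ((0:Fin n → ℝ) + sq m' • wk m) i
              ≤ T ((0:Fin n → ℝ) + (1/2:ℝ) • wk m) i := by
            intro m'
            exact aux_mono (hsq_lt m').le
              (fun s hs => aux_seg hC1 hJ 0 (wk m) s (hmem2 m' s hs) i)
              (fun s hs => Finset.sum_nonneg fun j _ =>
                mul_nonneg (hJpos _ (hmem2 m' s hs) i j).le
                  (hwkΩ m j).1.le)
          have hlim : Tendsto (fun m' => T ((0:Fin n → ℝ) + sq m' • wk m) i)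
              atTop (𝓝 0) := by
            have := hsmall (wk m) (hwkIcc m) i
            simpa using this
          exact le_of_tendsto hlim (Filter.Eventually.of_forall hmono2)
        have hsimp1 : ((0:Fin n → ℝ) + (1:ℝ) • wk m) = wk m := by simp
        rw [hsimp1] at hg1
        linarith
      intro i
      have hwk_to_q : Tendsto wk atTop (𝓝 q) := by
        have := (hsq_to0.smul_const (p - q)).const_add q
        simpa [hwkdef] using this
      have hlim := hTcont wk q hq_mem hwkIcc hwk_to_q i
      have hTq : T q i = q i := by rw [hq_fix]
      rw [hTq] at hlim
      have h2 := ge_of_tendsto hlim (Filter.Eventually.of_forall fun m => hTwk m i)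
      linarith [hβpos i]
    -- STEP 2 : J0 dominates J on the open box, and is positive
    have hJ0_ge : ∀ z, (∀ i, 0 < z i ∧ z i < p i) → ∀ i j, J z i j ≤ J0 i j := by
      intro z hz i j
      have hyΩ : ∀ m, ∀ i', 0 < (sq m • z) i' ∧ (sq m • z) i' < p i' := by
        intro m i'
        have h1 := (hz i').1
        have h2 := (hz i').2
        have h3 := hsq_pos m
        have h4 := hsq_lt m
        simp only [Pi.smul_apply, smul_eq_mul]
        constructor
        · exact mul_pos h3 h1
        · nlinarith
      have hy : Tendsto (fun m => sq m • z) atTop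
          (𝓝[{x : Fin n → ℝ | ∀ i, 0 < x i ∧ x i < p i}] 0) := by
        apply tendsto_nhdsWithin_of_tendsto_nhds_of_eventually_within
        · have := hsq_to0.smul_const z
          simpa using this
        · exact Filter.Eventually.of_forall hyΩ
      have hJy : Tendsto (fun m => J (sq m • z) i j) atTop (𝓝 (J0 i j)) := by
        have h1 := hJ0.comp hy
        exact ((continuous_apply j).tendsto _).comp
          (((continuous_apply i).tendsto _).comp h1)
      apply ge_of_tendsto hJy
      apply Filter.Eventually.of_forall
      intro m
      have h := hJanti (sq m • z) z (fun i' => (hyΩ m i').1) ?_ (fun i' => (hz i').2)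
      · exact h.1 i j
      · intro i'
        have h1 := (hz i').1
        have h4 := hsq_lt m
        simp only [Pi.smul_apply, smul_eq_mul]
        nlinarith
    have hmid : ∀ i', 0 < ((1/2:ℝ) • p) i' ∧ ((1/2:ℝ) • p) i' < p i' := by
      intro i'
      have := hp i'
      simp only [Pi.smul_apply, smul_eq_mul]
      constructor <;> nlinarith
    have hJ0pos : ∀ i j, 0 < J0 i j := fun i j =>
      lt_of_lt_of_le (hJpos _ hmid i j) (hJ0_ge _ hmid i j)
    -- STEP 3 : q ≤ J0 q with a strict component
    have hqΩ : ∀ i, 0 < q i ∧ q i < p i := fun i => ⟨hqpos i, hqp i⟩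
    have hx1Ω : ∀ i, 0 < ((1/2:ℝ) • q) i ∧ ((1/2:ℝ) • q) i < p i := by
      intro i
      have h1 := hqpos i
      have h2 := hqp i
      simp only [Pi.smul_apply, smul_eq_mul]
      constructor <;> nlinarith
    have hx2Ω : ∀ i, 0 < ((1/4:ℝ) • q) i ∧ ((1/4:ℝ) • q) i < p i := by
      intro i
      have h1 := hqpos i
      have h2 := hqp i
      simp only [Pi.smul_apply, smul_eq_mul]
      constructor <;> nlinarith
    obtain ⟨hle12, hne12⟩ := hJanti ((1/4:ℝ) • q) ((1/2:ℝ) • q)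
      (fun i => (hx2Ω i).1)
      (fun i => by
        have := hqpos i
        simp only [Pi.smul_apply, smul_eq_mul]
        nlinarith)
      (fun i => (hx1Ω i).2)
    obtain ⟨i₀, j₁, hstrict⟩ : ∃ i j, J ((1/2:ℝ) • q) i j < J ((1/4:ℝ) • q) i j := by
      by_contra h
      push_neg at h
      apply hne12
      funext i j
      exact le_antisymm (hle12 i j) (h i j)
    set M : Fin n → ℝ := fun i => ∑ j, J0 i j * q j with hMdef
    set δ : ℝ := (J0 i₀ j₁ - J ((1/2:ℝ) • q) i₀ j₁) * q j₁ with hδdef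
    have hδpos : 0 < δ :=
      mul_pos (sub_pos.mpr (lt_of_lt_of_le hstrict (hJ0_ge _ hx2Ω i₀ j₁))) (hqpos j₁)
    have hmem3 : ∀ a : ℝ, 0 < a → ∀ s ∈ Set.Icc a (1:ℝ),
        ∀ i', 0 < ((0:Fin n → ℝ) + s • q) i' ∧ ((0:Fin n → ℝ) + s • q) i' < p i' := by
      intro a ha s hs i'
      have h1 := hqpos i'
      have h2 := hqp i'
      simp only [Pi.add_apply, Pi.zero_apply, Pi.smul_apply, smul_eq_mul, zero_add]
      constructor
      · nlinarith [hs.1]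
      · nlinarith [hs.2]
    have hub : ∀ (i : Fin n) (a : ℝ), 0 < a → ∀ s ∈ Set.Icc a (1:ℝ),
        (∑ j, J ((0:Fin n → ℝ) + s • q) i j * q j) ≤ M i := by
      intro i a ha s hs
      rw [hMdef]
      apply Finset.sum_le_sum
      intro j _
      exact mul_le_mul_of_nonneg_right (hJ0_ge _ (hmem3 a ha s hs) i j) (hq0le j)
    have hq_eq : ∀ i, T ((0:Fin n → ℝ) + (1:ℝ) • q) i = q i := by
      intro i
      have h1 : ((0:Fin n → ℝ) + (1:ℝ) • q) = q := by simp
      rw [h1, hq_fix]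
    have hA : ∀ i, q i ≤ M i := by
      intro i
      have hbound : ∀ m : ℕ, T ((0:Fin n → ℝ) + (1:ℝ) • q) i
          ≤ T ((0:Fin n → ℝ) + sq m • q) i + M i * (1 - sq m) := fun m =>
        aux_ub (hsq_le1 m)
          (fun s hs => aux_seg hC1 hJ 0 q s (hmem3 (sq m) (hsq_pos m) s hs) i)
          (fun s hs => hub i (sq m) (hsq_pos m) s hs)
      have hlim : Tendsto (fun m => T ((0:Fin n → ℝ) + sq m • q) i + M i * (1 - sq m))
          atTop (𝓝 (0 + M i * (1 - 0))) := by
        apply Tendsto.add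
        · have := hsmall q hq_mem i
          simpa using this
        · exact (tendsto_const_nhds.sub hsq_to0).const_mul (M i)
      have h2 := ge_of_tendsto hlim (Filter.Eventually.of_forall hbound)
      rw [hq_eq i] at h2
      simpa using h2
    have hB : q i₀ < M i₀ := by
      have hub2 : ∀ s ∈ Set.Icc (3/4:ℝ) 1,
          (∑ j, J ((0:Fin n → ℝ) + s • q) i₀ j * q j) ≤ M i₀ - δ := by
        intro s hs
        have hJs : J ((0:Fin n → ℝ) + s • q) i₀ j₁ ≤ J ((1/2:ℝ) • q) i₀ j₁ := by
          have h := hJanti ((1/2:ℝ) • q) ((0:Fin n → ℝ) + s • q)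
            (fun i' => (hx1Ω i').1) ?_
            (fun i' => (hmem3 (3/4) (by norm_num) s hs i').2)
          · exact h.1 i₀ j₁
          · intro i'
            have h1 := hqpos i'
            simp only [Pi.add_apply, Pi.zero_apply, Pi.smul_apply, smul_eq_mul, zero_add]
            nlinarith [hs.1]
        have hterm : J ((0:Fin n → ℝ) + s • q) i₀ j₁ * q j₁ ≤ J0 i₀ j₁ * q j₁ - δ := by
          rw [hδdef]
          have := hqpos j₁
          nlinarith [hJs]
        have hrest := Finset.sum_le_sum (s := Finset.univ.erase j₁)
          (f := fun j => J ((0:Fin n → ℝ) + s • q) i₀ j * q j)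
          (g := fun j => J0 i₀ j * q j)
          (fun j _ => mul_le_mul_of_nonneg_right
            (hJ0_ge _ (hmem3 (3/4) (by norm_num) s hs) i₀ j) (hq0le j))
        have e1 : (∑ j, J ((0:Fin n → ℝ) + s • q) i₀ j * q j)
            = J ((0:Fin n → ℝ) + s • q) i₀ j₁ * q j₁
              + ∑ j ∈ Finset.univ.erase j₁, J ((0:Fin n → ℝ) + s • q) i₀ j * q j :=
          (Finset.add_sum_erase _ _ (Finset.mem_univ j₁)).symm
        have e2 : M i₀ = J0 i₀ j₁ * q j₁ + ∑ j ∈ Finset.univ.erase j₁, J0 i₀ j * q j := by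
          rw [hMdef]
          exact (Finset.add_sum_erase _ _ (Finset.mem_univ j₁)).symm
        rw [e1, e2]
        linarith
      have hb1 : ∀ m : ℕ, T ((0:Fin n → ℝ) + (1:ℝ) • q) i₀
          ≤ (T ((0:Fin n → ℝ) + sq m • q) i₀ + M i₀ * (3/4 - sq m))
            + (M i₀ - δ) * (1 - 3/4) := by
        intro m
        have hsub : ∀ s, s ∈ Set.Icc (sq m) (3/4:ℝ) → s ∈ Set.Icc (sq m) (1:ℝ) :=
          fun s hs => ⟨hs.1, le_trans hs.2 (by norm_num)⟩
        have hs34 : T ((0:Fin n → ℝ) + (3/4:ℝ) • q) i₀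
            ≤ T ((0:Fin n → ℝ) + sq m • q) i₀ + M i₀ * (3/4 - sq m) :=
          aux_ub (le_trans (hsq_lt m).le (by norm_num))
            (fun s hs => aux_seg hC1 hJ 0 q s
              (hmem3 (sq m) (hsq_pos m) s (hsub s hs)) i₀)
            (fun s hs => hub i₀ (sq m) (hsq_pos m) s (hsub s hs))
        have hs1 : T ((0:Fin n → ℝ) + (1:ℝ) • q) i₀
            ≤ T ((0:Fin n → ℝ) + (3/4:ℝ) • q) i₀ + (M i₀ - δ) * (1 - 3/4) :=
          aux_ub (by norm_num)
            (fun s hs => aux_seg hC1 hJ 0 q s (hmem3 (3/4) (by norm_num) s hs) i₀)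
            hub2
        linarith
      have hlim : Tendsto (fun m => (T ((0:Fin n → ℝ) + sq m • q) i₀
          + M i₀ * (3/4 - sq m)) + (M i₀ - δ) * (1 - 3/4))
          atTop (𝓝 ((0 + M i₀ * (3/4 - 0)) + (M i₀ - δ) * (1 - 3/4))) := by
        apply Tendsto.add
        · apply Tendsto.add
          · have := hsmall q hq_mem i₀
            simpa using this
          · exact (tendsto_const_nhds.sub hsq_to0).const_mul (M i₀)
        · exact tendsto_const_nhds
      have h2 := ge_of_tendsto hlim (Filter.Eventually.of_forall hb1)
      rw [hq_eq i₀] at h2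
      have : q i₀ ≤ M i₀ - δ / 4 := by linarith
      linarith
    -- STEP 4 : assemble the matrix contradiction
    have hMpos : ∀ i, 0 < M i := by
      intro i
      rw [hMdef]
      exact Finset.sum_pos (fun j _ => mul_pos (hJ0pos i j) (hqpos j))
        ⟨j₀, Finset.mem_univ j₀⟩
    have hstep : ∀ i, M i < ∑ j, J0 i j * M j := by
      intro i
      have h1 : (∑ j, J0 i j * M j) - M i = ∑ j, J0 i j * (M j - q j) := by
        rw [hMdef, ← Finset.sum_sub_distrib]
        apply Finset.sum_congr rfl
        intro j _
        ring
      have h2 : 0 < ∑ j, J0 i j * (M j - q j) := by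
        apply Finset.sum_pos'
          (fun j _ => mul_nonneg (hJ0pos i j).le (sub_nonneg.mpr (hA j)))
        exact ⟨i₀, Finset.mem_univ i₀,
          mul_pos (hJ0pos i i₀) (sub_pos.mpr hB)⟩
      linarith
    set c : ℝ := Finset.univ.inf' (⟨i₀, Finset.mem_univ i₀⟩ : Finset.univ.Nonempty)
      (fun i => (∑ j, J0 i j * M j) / M i) with hcdef
    have hc1 : 1 < c := by
      rw [hcdef]; refine (Finset.lt_inf'_iff ..).mpr ?_
      intro i _
      exact (one_lt_div (hMpos i)).mpr (hstep i)
    have hcM : ∀ i, c * M i ≤ ∑ j, J0 i j * M j := by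
      intro i
      have h1 : c ≤ (∑ j, J0 i j * M j) / M i :=
        Finset.inf'_le _ (Finset.mem_univ i)
      calc c * M i ≤ ((∑ j, J0 i j * M j) / M i) * M i :=
            mul_le_mul_of_nonneg_right h1 (hMpos i).le
        _ = ∑ j, J0 i j * M j := div_mul_cancel₀ _ (hMpos i).ne'
    exact aux_spec (Matrix.of J0) M i₀ (fun i j => (hJ0pos i j).le) hMpos hc1
      (fun i => hcM i) hρ

  -- conclusion
  intro x hx
  have h1 : ∀ k, T^[k] x ∈ Set.Icc (0 : Fin n → ℝ) p := hiter_mem x hx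
  have h2 : ∀ k, T^[k] x ≤ f k := fun k => hiter_mono x p hx hpmem hx.2 k
  apply tendsto_pi_nhds.mpr
  intro i
  refine tendsto_of_tendsto_of_tendsto_of_le_of_le (g := fun _ => (0:ℝ))
    (h := fun k => f k i) tendsto_const_nhds ?_ (fun k => by simpa using (h1 k).1 i)
    (fun k => h2 k i)
  have := hfq i
  rw [hq0] at this
  simpa using this
end

section
/- Let T(x) = φ + α(x)(x - φ) on a wall, where for coordinate j ≠ s we have T_j(x) = φ_j + α_j(x_s)(x_j - φ_j) with α_j(x_s) ∈ (0,1]. Suppose the focal point alignment holds: the focal point φ' of the next domain satisfies φ'_j = φ_j for all j ≠ s'. Then for every j ≠ s', sign(φ'_j - T_j(x)) = sign(φ_j - x_j); i.e., the sign vector Δ_j = sign(φ_j - x_j) is preserved by the transition map in all non-switching directions. -/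
/-- Sign preservation under a local transition map with aligned focal points:
if `T j = φ j + α j * (x j - φ j)` with `α j ∈ (0,1]` and the focal point `φ'`
of the next domain satisfies `φ' j = φ j` for all non-switching directions
`j ≠ s'`, then `sign (φ' j - T j) = sign (φ j - x j)` for all `j ≠ s'`. -/
theorem stmt_14 (n : ℕ) (s' : Fin n) (φ φ' x α : Fin n → ℝ)
    (hα : ∀ j, 0 < α j ∧ α j ≤ 1)
    (halign : ∀ j, j ≠ s' → φ' j = φ j) :
    ∀ j, j ≠ s' →
      Real.sign (φ' j - (φ j + α j * (x j - φ j))) = Real.sign (φ j - x j) := by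
  intro j hj
  have h := (hα j).1
  have : φ' j - (φ j + α j * (x j - φ j)) = α j * (φ j - x j) := by
    rw [halign j hj]; ring
  rw [this]
  rcases lt_trichotomy (φ j - x j) 0 with hlt | heq | hgt
  · rw [Real.sign_of_neg hlt, Real.sign_of_neg (mul_neg_of_pos_of_neg h hlt)]
  · rw [heq, mul_zero]
  · rw [Real.sign_of_pos hgt, Real.sign_of_pos (mul_pos h hgt)]
end
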